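/- Let I = {1,…,N} be a finite index set, θ ∈ ℝ a threshold, m > 0, v : I → ℝ potentials, and H : I × I → ℝ synaptic weights with H j i ≥ m for all i, j ∈ I. If the set J⁰ = {i ∈ I : v i ≥ θ} is nonempty and v i ≥ θ − m for every i ∈ I, then the fired set of the firing cascade equals all of I, i.e. J = I. -/
import Mathlib


open Finset

open scoped Classical in
/-- Cumulative union `⋃_{q ≤ p} J^q` of the firing cascade. -/
noncomputable def cumFired {N : ℕ} (θ : ℝ) (v : Fin N → ℝ) (H : Fin N → Fin N → ℝ) :
    ℕ → Finset (Fin N)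
  | 0 => Finset.univ.filter (fun i => θ ≤ v i)
  | p + 1 =>
      cumFired θ v H p ∪
        Finset.univ.filter
          (fun i => i ∉ cumFired θ v H p ∧ θ ≤ v i + ∑ j ∈ cumFired θ v H p, H j i)

open scoped Classical in
/-- The set `J^p` of neurons firing at step `p` of the cascade:
`J⁰ = {i : v i ≥ θ}` and
`J^{p+1} = {i ∉ ⋃_{q ≤ p} J^q : v i + ∑_{j ∈ ⋃_{q ≤ p} J^q} H j i ≥ θ}`. -/
noncomputable def fireStep {N : ℕ} (θ : ℝ) (v : Fin N → ℝ) (H : Fin N → Fin N → ℝ) :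
    ℕ → Finset (Fin N)
  | 0 => Finset.univ.filter (fun i => θ ≤ v i)
  | p + 1 =>
      Finset.univ.filter
        (fun i => i ∉ cumFired θ v H p ∧ θ ≤ v i + ∑ j ∈ cumFired θ v H p, H j i)

/-- The fired set `J = ⋃_{p ∈ ℕ} J^p`. -/
def firedSet {N : ℕ} (θ : ℝ) (v : Fin N → ℝ) (H : Fin N → Fin N → ℝ) : Set (Fin N) :=
  {i | ∃ p : ℕ, i ∈ fireStep θ v H p}

/-- If `J⁰` is nonempty and every potential is at least `θ - m`, with all synaptic
weights at least `m > 0`, then the whole network fires: `J = I`. -/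
theorem full_synchronization_of_all_near_threshold {N : ℕ} (θ m : ℝ) (hm : 0 < m)
    (v : Fin N → ℝ) (H : Fin N → Fin N → ℝ)
    (hH : ∀ i j : Fin N, m ≤ H j i)
    (h0 : (fireStep θ v H 0).Nonempty)
    (hv : ∀ i : Fin N, θ - m ≤ v i) :
    firedSet θ v H = Set.univ := by
  classical
  ext i
  simp only [firedSet, Set.mem_setOf_eq, Set.mem_univ, iff_true]
  by_cases hi : i ∈ cumFired θ v H 0
  · exact ⟨0, by simpa [cumFired, fireStep] using hi⟩
  · refine ⟨1, ?_⟩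
    simp only [fireStep, Finset.mem_filter, Finset.mem_univ, true_and]
    refine ⟨hi, ?_⟩
    have hcard : 1 ≤ (cumFired θ v H 0).card := by
      have : (cumFired θ v H 0).Nonempty := by
        simpa [cumFired, fireStep] using h0
      exact Finset.card_pos.mpr this
    have hsum : m ≤ ∑ j ∈ cumFired θ v H 0, H j i := by
      calc m = (1 : ℕ) • m := by simp
        _ ≤ (cumFired θ v H 0).card • m := by
            exact nsmul_le_nsmul_left hm.le hcard
        _ ≤ ∑ j ∈ cumFired θ v H 0, H j i :=
            Finset.card_nsmul_le_sum _ _ _ (fun j _ => hH i j)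
    linarith [hv i]
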